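/- Let n ≥ 3. In the Artin group A(B_n) with standard generators t, s_1, …, s_{n-1}, set δ = t·s_1·s_2⋯s_{n-1} and s_n = δ·s_{n-1}·δ⁻¹. Then the subgroup of A(B_n) generated by s_1, …, s_n is isomorphic to the Artin group A(Ã_{n-1}) via an isomorphism sending the standard generator a_i of A(Ã_{n-1}) to s_i for every i ∈ {1, …, n}. -/

import Mathlib

namespace Stmt0

/-- The braid relator `x y x (y x y)⁻¹` (weight 3). -/
def braidRel {γ : Type} (x y : FreeGroup γ) : FreeGroup γ := x * y * x * (y * x * y)⁻¹

/-- The commutation relator `x y (y x)⁻¹` (weight 2). -/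
def commRel {γ : Type} (x y : FreeGroup γ) : FreeGroup γ := x * y * (y * x)⁻¹

/-- The weight-4 relator `x y x y (y x y x)⁻¹`. -/
def w4Rel {γ : Type} (x y : FreeGroup γ) : FreeGroup γ := x * y * x * y * (y * x * y * x)⁻¹

/-- Relations of the Artin group `A(B_n)`.  Generator `0` is `t` and generator
`i` (for `1 ≤ i ≤ n - 1`) is `s_i`. -/
def BnRels (n : ℕ) : Set (FreeGroup (Fin n)) :=
  { r | ∃ i j : Fin n,
      ((i : ℕ) = 0 ∧ (j : ℕ) = 1 ∧ r = w4Rel (.of i) (.of j)) ∨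
      (1 ≤ (i : ℕ) ∧ (j : ℕ) = (i : ℕ) + 1 ∧ r = braidRel (.of i) (.of j)) ∨
      ((i : ℕ) = 0 ∧ 2 ≤ (j : ℕ) ∧ r = commRel (.of i) (.of j)) ∨
      (1 ≤ (i : ℕ) ∧ (i : ℕ) + 2 ≤ (j : ℕ) ∧ r = commRel (.of i) (.of j)) }

/-- The Artin group `A(B_n)`. -/
abbrev ArtinB (n : ℕ) : Type := PresentedGroup (BnRels n)

/-- The standard generators of `A(B_n)`: `bgen n 0 = t` and `bgen n i = s_i`
for `1 ≤ i ≤ n - 1` (junk value `1` otherwise). -/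
def bgen (n : ℕ) (i : ℕ) : ArtinB n :=
  if h : i < n then PresentedGroup.of ⟨i, h⟩ else 1

/-- The element `δ = t · s_1 · s_2 ⋯ s_{n-1}` of `A(B_n)`. -/
def delta (n : ℕ) : ArtinB n := ((List.range n).map (bgen n)).prod

/-- The elements `s_1, …, s_n` of `A(B_n)`, where `s_n = δ · s_{n-1} · δ⁻¹`. -/
def sgen (n : ℕ) (i : ℕ) : ArtinB n :=
  if i = n then delta n * bgen n (n - 1) * (delta n)⁻¹ else bgen n i

/-- Relations of the Artin group `A(Ã_{n-1})`: the generator indexed by `i : Fin n`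
is `a_{i+1}`; cyclically adjacent generators braid, all other pairs commute. -/
def AtildeRels (n : ℕ) : Set (FreeGroup (Fin n)) :=
  { r | ∃ i j : Fin n,
      ((j : ℕ) = ((i : ℕ) + 1) % n ∧ r = braidRel (.of i) (.of j)) ∨
      (i ≠ j ∧ (j : ℕ) ≠ ((i : ℕ) + 1) % n ∧ (i : ℕ) ≠ ((j : ℕ) + 1) % n ∧
        r = commRel (.of i) (.of j)) }

/-- The Artin group `A(Ã_{n-1})`. -/
abbrev Atilde (n : ℕ) : Type := PresentedGroup (AtildeRels n)

/-- The standard generator `a_i` (for `1 ≤ i ≤ n`) of `A(Ã_{n-1})`. -/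
def a (n : ℕ) (i : ℕ) : Atilde n :=
  if h : 0 < n then PresentedGroup.of ⟨(i - 1) % n, Nat.mod_lt _ h⟩ else 1



/-- product g_s * g_{s+1} * ... * g_{s+k-1} -/
def P {H : Type*} [Group H] (g : ℕ → H) (s k : ℕ) : H := ((List.range' s k).map g).prod

section Abstract

variable {H : Type*} [Group H] (m : ℕ) (g : ℕ → H)

lemma P_concat (s k : ℕ) : P g s (k+1) = P g s k * g (s+k) := by
  simp [P, List.range'_1_concat]

lemma P_cons (s k : ℕ) : P g s (k+1) = g s * P g (s+1) k := by
  simp [P, List.range'_succ]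

lemma P_one (s : ℕ) : P g s 1 = g s := by simp [P]

lemma P_split (s k l : ℕ) : P g s (k+l) = P g s k * P g (s+k) l := by
  rw [P, ← List.range'_append_1 (s := s) (m := k) (n := l), List.map_append,
    List.prod_append]; rfl

lemma commute_P (x : H) (s k : ℕ) (h : ∀ t, s ≤ t → t < s+k → Commute x (g t)) :
    Commute x (P g s k) := by
  induction k with
  | zero => simp [P]
  | succ k ih =>
    rw [P_concat]
    exact Commute.mul_right (ih fun t ht ht' => h t ht (by omega))
      (h (s+k) (by omega) (by omega))

variable {hbr : ∀ i, 1 ≤ i → i + 1 ≤ m → g i * g (i+1) * g i = g (i+1) * g i * g (i+1)}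

/-- c = g_1 ⋯ g_m -/
lemma lemB (hbr : ∀ i, 1 ≤ i → i + 1 ≤ m → g i * g (i+1) * g i = g (i+1) * g i * g (i+1))
    (hcm : ∀ i j, 1 ≤ i → i + 2 ≤ j → j ≤ m → Commute (g i) (g j)) (i : ℕ) (h1 : 1 ≤ i) (h2 : i + 1 ≤ m) :
    P g 1 m * g i = g (i+1) * P g 1 m := by
  obtain ⟨p, rfl⟩ : ∃ p, i = p + 1 := ⟨i - 1, by omega⟩
  obtain ⟨q, hq⟩ : ∃ q, m = p + 2 + q := ⟨m - (p+2), by omega⟩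
  have hsplit : P g 1 m = P g 1 p * g (p+1) * g (p+2) * P g (p+3) q := by
    rw [hq, show p + 2 + q = p + 1 + 1 + q by ring, P_split g 1 (p+1+1) q,
      P_split g 1 (p+1) 1, P_split g 1 p 1, P_one, P_one,
      show (1:ℕ) + p = p + 1 by ring, show (1:ℕ) + (p+1) = p + 2 by ring,
      show (1:ℕ) + (p+1+1) = p + 3 by ring]
  have c1 : Commute (g (p+1)) (P g (p+3) q) :=
    commute_P g _ _ _ (fun t ht ht' => hcm (p+1) t (by omega) (by omega) (by omega))
  have c2 : Commute (g (p+2)) (P g 1 p) :=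
    ((commute_P g (g (p+2)) 1 p (fun t ht ht' => (hcm t (p+2) (by omega) (by omega) (by omega)).symm))).symm.symm
  calc P g 1 m * g (p+1)
      = P g 1 p * g (p+1) * g (p+2) * (P g (p+3) q * g (p+1)) := by rw [hsplit]; group
    _ = P g 1 p * (g (p+1) * g (p+2) * g (p+1)) * P g (p+3) q := by
        rw [← c1.eq]; group
    _ = P g 1 p * (g (p+2) * g (p+1) * g (p+2)) * P g (p+3) q := by
        rw [hbr (p+1) (by omega) (by omega)]
    _ = g (p+2) * P g 1 p * g (p+1) * g (p+2) * P g (p+3) q := by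
        rw [show P g 1 p * (g (p+2) * g (p+1) * g (p+2)) = (P g 1 p * g (p+2)) * g (p+1) * g (p+2) by group,
          ← c2.eq]
    _ = g (p+2) * P g 1 m := by rw [hsplit]; group

lemma lemC (hbr : ∀ i, 1 ≤ i → i + 1 ≤ m → g i * g (i+1) * g i = g (i+1) * g i * g (i+1))
    (hcm : ∀ i j, 1 ≤ i → i + 2 ≤ j → j ≤ m → Commute (g i) (g j)) (k : ℕ) (hk : k + 1 ≤ m) :
    P g 1 m * P g 1 k = P g 2 k * P g 1 m := by
  induction k with
  | zero => simp [P]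
  | succ k ih =>
    rw [P_concat, P_concat, ← mul_assoc, ih (by omega), mul_assoc,
      show (1:ℕ)+k = k+1 by ring, lemB m g hbr hcm (k+1) (by omega) (by omega)]
    rw [show (2:ℕ)+k = k+1+1 by ring]; group

lemma lemD (hbr : ∀ i, 1 ≤ i → i + 1 ≤ m → g i * g (i+1) * g i = g (i+1) * g i * g (i+1))
    (hcm : ∀ i j, 1 ≤ i → i + 2 ≤ j → j ≤ m → Commute (g i) (g j)) (e : ℕ) (he : m = e + 1) :
    P g 1 m * P g 1 m = P g 2 e * P g 1 e * g m * g m := by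
  have h1 : P g 1 m = P g 1 e * g m := by rw [he, P_concat, show (1:ℕ)+e = e+1 by ring]
  calc P g 1 m * P g 1 m = (P g 1 m * P g 1 e) * g m := by
        conv_lhs => rw [show P g 1 m * P g 1 m = P g 1 m * (P g 1 e * g m) from by rw [← h1]]
        group
    _ = P g 2 e * P g 1 m * g m := by rw [lemC m g hbr hcm e (by omega)]
    _ = P g 2 e * P g 1 e * g m * g m := by rw [h1]; group

lemma lemE (hbr : ∀ i, 1 ≤ i → i + 1 ≤ m → g i * g (i+1) * g i = g (i+1) * g i * g (i+1))
    (hcm : ∀ i j, 1 ≤ i → i + 2 ≤ j → j ≤ m → Commute (g i) (g j))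
    (hc0 : ∀ j, 2 ≤ j → j ≤ m → Commute (g 0) (g j)) (i : ℕ) (h1 : 1 ≤ i) (h2 : i + 1 ≤ m) :
    (g 0 * P g 1 m) * g i = g (i+1) * (g 0 * P g 1 m) := by
  rw [mul_assoc, lemB m g hbr hcm i h1 h2, ← mul_assoc, (hc0 (i+1) (by omega) h2).eq, mul_assoc]

lemma lemF (hbr : ∀ i, 1 ≤ i → i + 1 ≤ m → g i * g (i+1) * g i = g (i+1) * g i * g (i+1))
    (hcm : ∀ i j, 1 ≤ i → i + 2 ≤ j → j ≤ m → Commute (g i) (g j))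
    (hc0 : ∀ j, 2 ≤ j → j ≤ m → Commute (g 0) (g j))
    (h4 : g 0 * g 1 * g 0 * g 1 = g 1 * g 0 * g 1 * g 0) (e : ℕ) (he : m = e + 1) (he1 : 1 ≤ e) :
    g 1 * ((g 0 * P g 1 m) * (g 0 * P g 1 m)) = ((g 0 * P g 1 m) * (g 0 * P g 1 m)) * g m := by
  set c := P g 1 m with hc
  set Q := P g 2 e with hQ
  have hcQ : c = g 1 * Q := by rw [hc, hQ, he, P_cons]
  have h0Q : Commute (g 0) Q :=
    commute_P g _ _ _ (fun t ht ht' => hc0 t (by omega) (by omega))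
  have hd2 : (g 0 * c) * (g 0 * c) = g 0 * g 1 * g 0 * Q * c := by
    calc (g 0 * c) * (g 0 * c) = g 0 * (g 1 * (Q * g 0)) * c := by rw [hcQ]; group
      _ = g 0 * g 1 * g 0 * Q * c := by rw [h0Q.symm.eq]; group
  have hD := lemD m g hbr hcm e he
  calc g 1 * ((g 0 * c) * (g 0 * c)) = g 1 * g 0 * g 1 * g 0 * Q * c := by rw [hd2]; group
    _ = g 0 * g 1 * g 0 * (g 1 * Q) * c := by rw [← h4]; group
    _ = g 0 * g 1 * g 0 * (c * c) := by rw [← hcQ]; group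
    _ = g 0 * g 1 * g 0 * (Q * P g 1 e * g m * g m) := by rw [hD, hQ]
    _ = g 0 * g 1 * g 0 * Q * (P g 1 e * g m) * g m := by group
    _ = g 0 * g 1 * g 0 * Q * c * g m := by
        rw [show P g 1 e * g m = c by rw [hc, he, P_concat, show (1:ℕ)+e = e+1 by ring]]
    _ = ((g 0 * c) * (g 0 * c)) * g m := by rw [hd2]

end Abstract

section Helpers


variable {α : Type} {rels : Set (FreeGroup α)}

lemma mk_rel_one {r : FreeGroup α} (h : r ∈ rels) : PresentedGroup.mk rels r = 1 :=
  (QuotientGroup.eq_one_iff r).mpr (Subgroup.subset_normalClosure h)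

lemma braid_of {x y : α} (h : braidRel (FreeGroup.of x) (FreeGroup.of y) ∈ rels) :
    (PresentedGroup.of x : PresentedGroup rels) * .of y * .of x = .of y * .of x * .of y := by
  have h1 := mk_rel_one h
  rw [braidRel] at h1
  simp only [map_mul, map_inv, mul_inv_eq_one] at h1
  exact h1

lemma comm_of {x y : α} (h : commRel (FreeGroup.of x) (FreeGroup.of y) ∈ rels) :
    Commute (PresentedGroup.of x : PresentedGroup rels) (.of y) := by
  have h1 := mk_rel_one h
  rw [commRel] at h1
  simp only [map_mul, map_inv, mul_inv_eq_one] at h1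
  exact h1

lemma w4_of {x y : α} (h : w4Rel (FreeGroup.of x) (FreeGroup.of y) ∈ rels) :
    (PresentedGroup.of x : PresentedGroup rels) * .of y * .of x * .of y
      = .of y * .of x * .of y * .of x := by
  have h1 := mk_rel_one h
  rw [w4Rel] at h1
  simp only [map_mul, map_inv, mul_inv_eq_one] at h1
  exact h1

lemma conj_braid {G : Type*} [Group G] (d x y : G) (h : x*y*x = y*x*y) :
    (d*x*d⁻¹) * (d*y*d⁻¹) * (d*x*d⁻¹) = (d*y*d⁻¹) * (d*x*d⁻¹) * (d*y*d⁻¹) := by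
  have e1 : (d*x*d⁻¹) * (d*y*d⁻¹) * (d*x*d⁻¹) = d*(x*y*x)*d⁻¹ := by group
  have e2 : (d*y*d⁻¹) * (d*x*d⁻¹) * (d*y*d⁻¹) = d*(y*x*y)*d⁻¹ := by group
  rw [e1, e2, h]

lemma conj_comm {G : Type*} [Group G] (d x y : G) (h : Commute x y) :
    Commute (d*x*d⁻¹) (d*y*d⁻¹) := by
  unfold Commute SemiconjBy
  have e1 : (d*x*d⁻¹) * (d*y*d⁻¹) = d*(x*y)*d⁻¹ := by group
  have e2 : (d*y*d⁻¹) * (d*x*d⁻¹) = d*(y*x)*d⁻¹ := by group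
  rw [e1, e2, h.eq]


end Helpers

section BSide

variable {n : ℕ}

lemma bgen_eq (i : ℕ) (h : i < n) : bgen n i = PresentedGroup.of ⟨i, h⟩ := dif_pos h

lemma Hbr (hn : 3 ≤ n) : ∀ i, 1 ≤ i → i + 1 ≤ n - 1 →
    bgen n i * bgen n (i+1) * bgen n i = bgen n (i+1) * bgen n i * bgen n (i+1) := by
  intro i h1 h2
  rw [bgen_eq i (by omega), bgen_eq (i+1) (by omega)]
  exact braid_of ⟨⟨i, by omega⟩, ⟨i+1, by omega⟩, Or.inr (Or.inl ⟨h1, rfl, rfl⟩)⟩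

lemma Hcm (hn : 3 ≤ n) : ∀ i j, 1 ≤ i → i + 2 ≤ j → j ≤ n - 1 →
    Commute (bgen n i) (bgen n j) := by
  intro i j h1 h2 h3
  rw [bgen_eq i (by omega), bgen_eq j (by omega)]
  exact comm_of ⟨⟨i, by omega⟩, ⟨j, by omega⟩, Or.inr (Or.inr (Or.inr ⟨h1, h2, rfl⟩))⟩

lemma Hc0 (hn : 3 ≤ n) : ∀ j, 2 ≤ j → j ≤ n - 1 →
    Commute (bgen n 0) (bgen n j) := by
  intro j h1 h2
  rw [bgen_eq 0 (by omega), bgen_eq j (by omega)]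
  exact comm_of ⟨⟨0, by omega⟩, ⟨j, by omega⟩, Or.inr (Or.inr (Or.inl ⟨rfl, h1, rfl⟩))⟩

lemma H4 (hn : 3 ≤ n) :
    bgen n 0 * bgen n 1 * bgen n 0 * bgen n 1 = bgen n 1 * bgen n 0 * bgen n 1 * bgen n 0 := by
  rw [bgen_eq 0 (by omega), bgen_eq 1 (by omega)]
  exact w4_of ⟨⟨0, by omega⟩, ⟨1, by omega⟩, Or.inl ⟨rfl, rfl, rfl⟩⟩

lemma delta_eq (hn : 3 ≤ n) : delta n = bgen n 0 * P (bgen n) 1 (n-1) := by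
  obtain ⟨m, hm⟩ : ∃ m, n = m + 1 := ⟨n - 1, by omega⟩
  subst hm
  rw [delta, List.range_eq_range', P, List.range'_succ]
  simp

lemma sgen_eq_bgen {i : ℕ} (h : i ≠ n) : sgen n i = bgen n i := if_neg h

lemma sgen_top : sgen n n = delta n * bgen n (n-1) * (delta n)⁻¹ := if_pos rfl

lemma cyc (hn : 3 ≤ n) (i : ℕ) (h1 : 1 ≤ i) (h2 : i ≤ n) :
    delta n * sgen n i * (delta n)⁻¹ = sgen n (i % n + 1) := by
  rcases Nat.lt_or_ge i (n-1) with hlt | hge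
  · have hmod : i % n = i := Nat.mod_eq_of_lt (by omega)
    rw [hmod, sgen_eq_bgen (show i ≠ n by omega), sgen_eq_bgen (show i+1 ≠ n by omega),
      delta_eq hn]
    have hE := lemE (n-1) (bgen n) (Hbr hn) (Hcm hn) (Hc0 hn) i h1 (by omega)
    rw [hE, mul_inv_cancel_right]
  · rcases Nat.lt_or_ge i n with hlt2 | hge2
    · -- i = n - 1
      have hi : i = n - 1 := by omega
      rw [hi, Nat.mod_eq_of_lt (by omega), show n - 1 + 1 = n by omega, sgen_top,
        sgen_eq_bgen (show n - 1 ≠ n by omega)]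
    · -- i = n
      have hi : i = n := by omega
      rw [hi]
      rw [Nat.mod_self, sgen_top, sgen_eq_bgen (show (1:ℕ) ≠ n by omega), delta_eq hn]
      have hF := lemF (n-1) (bgen n) (Hbr hn) (Hcm hn) (Hc0 hn) (H4 hn) (n-2) (by omega) (by omega)
      set d := bgen n 0 * P (bgen n) 1 (n-1) with hd
      -- hF : g 1 * (d * d) = (d * d) * g (n-1)
      have : bgen n 1 = (d * d) * bgen n (n-1) * (d*d)⁻¹ := by rw [← hF]; group
      rw [this]; group

lemma braidS_le (hn : 3 ≤ n) (i : ℕ) (h1 : 1 ≤ i) (h2 : i + 1 ≤ n - 1) :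
    sgen n i * sgen n (i+1) * sgen n i = sgen n (i+1) * sgen n i * sgen n (i+1) := by
  rw [sgen_eq_bgen (show i ≠ n by omega), sgen_eq_bgen (show i + 1 ≠ n by omega)]
  exact Hbr hn i h1 h2

lemma braidS_n1 (hn : 3 ≤ n) :
    sgen n (n-1) * sgen n n * sgen n (n-1) = sgen n n * sgen n (n-1) * sgen n n := by
  have e1 : delta n * sgen n (n-2) * (delta n)⁻¹ = sgen n (n-1) := by
    have := cyc hn (n-2) (by omega) (by omega)
    rwa [Nat.mod_eq_of_lt (by omega), show n - 2 + 1 = n - 1 by omega] at this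
  have e2 : delta n * sgen n (n-1) * (delta n)⁻¹ = sgen n n := by
    have := cyc hn (n-1) (by omega) (by omega)
    rwa [Nat.mod_eq_of_lt (by omega), show n - 1 + 1 = n by omega] at this
  rw [← e1, ← e2]
  have hb := braidS_le hn (n-2) (by omega) (by omega)
  rw [show n - 2 + 1 = n - 1 by omega] at hb
  exact conj_braid _ _ _ hb

lemma braidS_n (hn : 3 ≤ n) :
    sgen n n * sgen n 1 * sgen n n = sgen n 1 * sgen n n * sgen n 1 := by
  have e2 : delta n * sgen n (n-1) * (delta n)⁻¹ = sgen n n := by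
    have := cyc hn (n-1) (by omega) (by omega)
    rwa [Nat.mod_eq_of_lt (by omega), show n - 1 + 1 = n by omega] at this
  have e3 : delta n * sgen n n * (delta n)⁻¹ = sgen n 1 := by
    have := cyc hn n (by omega) (by omega)
    rwa [Nat.mod_self] at this
  rw [← e2, ← e3]
  exact conj_braid _ _ _ (braidS_n1 hn)

lemma commS (hn : 3 ≤ n) (i j : ℕ) (h1 : 1 ≤ i) (h2 : i + 2 ≤ j) (h3 : j ≤ n)
    (h4 : ¬(i = 1 ∧ j = n)) : Commute (sgen n i) (sgen n j) := by
  rcases Nat.lt_or_ge j n with hlt | hge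
  · rw [sgen_eq_bgen (show i ≠ n by omega), sgen_eq_bgen (show j ≠ n by omega)]
    exact Hcm hn i j h1 h2 (by omega)
  · have hj : j = n := by omega
    rw [hj]
    have hi2 : 2 ≤ i := by
      rcases Nat.lt_or_ge i 2 with h | h
      · exfalso; exact h4 ⟨by omega, by omega⟩
      · exact h
    have e1 : delta n * sgen n (i-1) * (delta n)⁻¹ = sgen n i := by
      have := cyc hn (i-1) (by omega) (by omega)
      rwa [Nat.mod_eq_of_lt (by omega), show i - 1 + 1 = i by omega] at this
    have e2 : delta n * sgen n (n-1) * (delta n)⁻¹ = sgen n n := by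
      have := cyc hn (n-1) (by omega) (by omega)
      rwa [Nat.mod_eq_of_lt (by omega), show n - 1 + 1 = n by omega] at this
    rw [← e1, ← e2]
    apply conj_comm
    rw [sgen_eq_bgen (show i - 1 ≠ n by omega), sgen_eq_bgen (show n - 1 ≠ n by omega)]
    exact Hcm hn (i-1) (n-1) (by omega) (by omega) (by omega)

end BSide

section ASide

variable {n : ℕ}

lemma a_eq (hn : 3 ≤ n) (i : ℕ) : a n i = PresentedGroup.of ⟨(i-1) % n, Nat.mod_lt _ (by omega)⟩ :=
  dif_pos (by omega)

lemma Habr (hn : 3 ≤ n) : ∀ i, 1 ≤ i → i + 1 ≤ n - 1 →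
    a n i * a n (i+1) * a n i = a n (i+1) * a n i * a n (i+1) := by
  intro i h1 h2
  rw [a_eq hn i, a_eq hn (i+1)]
  apply braid_of
  refine ⟨_, _, Or.inl ⟨?_, rfl⟩⟩
  show (i + 1 - 1) % n = ((i-1) % n + 1) % n
  rw [Nat.mod_add_mod, show i + 1 - 1 = i by omega, show i - 1 + 1 = i by omega]

lemma Hacm (hn : 3 ≤ n) : ∀ i j, 1 ≤ i → i + 2 ≤ j → j ≤ n - 1 →
    Commute (a n i) (a n j) := by
  intro i j h1 h2 h3
  rw [a_eq hn i, a_eq hn j]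
  apply comm_of
  refine ⟨_, _, Or.inr ⟨?_, ?_, ?_, rfl⟩⟩
  · simp only [ne_eq, Fin.mk.injEq]
    rw [Nat.mod_eq_of_lt (by omega), Nat.mod_eq_of_lt (by omega)]
    omega
  · show (j - 1) % n ≠ ((i-1) % n + 1) % n
    rw [Nat.mod_add_mod, Nat.mod_eq_of_lt (by omega), Nat.mod_eq_of_lt (by omega)]
    omega
  · show (i - 1) % n ≠ ((j-1) % n + 1) % n
    rw [Nat.mod_add_mod, Nat.mod_eq_of_lt (by omega), Nat.mod_eq_of_lt (by omega),
      show j - 1 + 1 = j by omega]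
    omega

/-- +1 mod n is injective on Fin-like range -/
lemma add_mod_cancel {x y c : ℕ} (hx : x < n) (hy : y < n) (h : (x + c) % n = (y + c) % n) :
    x = y := by
  have : x % n = y % n := Nat.ModEq.add_right_cancel' c h
  rwa [Nat.mod_eq_of_lt hx, Nat.mod_eq_of_lt hy] at this

lemma tau_rels_up (hn : 3 ≤ n) :
    ∀ r ∈ AtildeRels n, FreeGroup.lift
      (fun k : Fin n => (PresentedGroup.of ⟨((k : ℕ) + 1) % n, Nat.mod_lt _ (by omega)⟩ :
        Atilde n)) r = 1 := by
  rintro r ⟨i, j, (⟨hj, rfl⟩ | ⟨hne, hji, hij, rfl⟩)⟩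
  · simp only [braidRel, map_mul, map_inv, FreeGroup.lift_apply_of, mul_inv_eq_one]
    apply braid_of
    refine ⟨_, _, Or.inl ⟨?_, rfl⟩⟩
    show ((j : ℕ) + 1) % n = (((i : ℕ) + 1) % n + 1) % n
    rw [Nat.mod_add_mod, hj, Nat.mod_add_mod]
  · simp only [commRel, map_mul, map_inv, FreeGroup.lift_apply_of, mul_inv_eq_one]
    apply (comm_of ?_).eq
    refine ⟨_, _, Or.inr ⟨?_, ?_, ?_, rfl⟩⟩
    · simp only [ne_eq, Fin.mk.injEq]
      intro h
      exact hne (Fin.ext (add_mod_cancel i.isLt j.isLt h))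
    · show ((j : ℕ) + 1) % n ≠ (((i : ℕ) + 1) % n + 1) % n
      rw [Nat.mod_add_mod]
      intro h
      apply hji
      have := add_mod_cancel (c := 1) (j.isLt) (Nat.mod_lt (i.1+1) (y := n) (by omega))
        (by rw [Nat.mod_add_mod]; exact h)
      rw [this]
    · show ((i : ℕ) + 1) % n ≠ (((j : ℕ) + 1) % n + 1) % n
      rw [Nat.mod_add_mod]
      intro h
      apply hij
      have := add_mod_cancel (c := 1) (i.isLt) (Nat.mod_lt (j.1+1) (y := n) (by omega))
        (by rw [Nat.mod_add_mod]; exact h)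
      rw [this]

lemma tau_rels_down (hn : 3 ≤ n) :
    ∀ r ∈ AtildeRels n, FreeGroup.lift
      (fun k : Fin n => (PresentedGroup.of ⟨((k : ℕ) + (n-1)) % n, Nat.mod_lt _ (by omega)⟩ :
        Atilde n)) r = 1 := by
  rintro r ⟨i, j, (⟨hj, rfl⟩ | ⟨hne, hji, hij, rfl⟩)⟩
  · simp only [braidRel, map_mul, map_inv, FreeGroup.lift_apply_of, mul_inv_eq_one]
    apply braid_of
    refine ⟨_, _, Or.inl ⟨?_, rfl⟩⟩
    show ((j : ℕ) + (n-1)) % n = (((i : ℕ) + (n-1)) % n + 1) % n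
    rw [Nat.mod_add_mod, hj, Nat.mod_add_mod, show (i:ℕ) + (n-1) + 1 = (i:ℕ) + 1 + (n-1) by omega]
  · simp only [commRel, map_mul, map_inv, FreeGroup.lift_apply_of, mul_inv_eq_one]
    apply (comm_of ?_).eq
    refine ⟨_, _, Or.inr ⟨?_, ?_, ?_, rfl⟩⟩
    · simp only [ne_eq, Fin.mk.injEq]
      intro h
      exact hne (Fin.ext (add_mod_cancel i.isLt j.isLt h))
    · show ((j : ℕ) + (n-1)) % n ≠ (((i : ℕ) + (n-1)) % n + 1) % n
      rw [Nat.mod_add_mod, show (i:ℕ) + (n-1) + 1 = (i:ℕ) + 1 + (n-1) by omega]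
      intro h
      apply hji
      have := add_mod_cancel (c := n-1) (j.isLt) (Nat.mod_lt ((i:ℕ)+1) (y := n) (by omega))
        (by rw [Nat.mod_add_mod]; exact h)
      rw [this]
    · show ((i : ℕ) + (n-1)) % n ≠ (((j : ℕ) + (n-1)) % n + 1) % n
      rw [Nat.mod_add_mod, show (j:ℕ) + (n-1) + 1 = (j:ℕ) + 1 + (n-1) by omega]
      intro h
      apply hij
      have := add_mod_cancel (c := n-1) (i.isLt) (Nat.mod_lt ((j:ℕ)+1) (y := n) (by omega))
        (by rw [Nat.mod_add_mod]; exact h)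
      rw [this]

noncomputable def tauUp (hn : 3 ≤ n) : Atilde n →* Atilde n :=
  PresentedGroup.toGroup (tau_rels_up hn)

noncomputable def tauDown (hn : 3 ≤ n) : Atilde n →* Atilde n :=
  PresentedGroup.toGroup (tau_rels_down hn)

lemma tauDown_tauUp (hn : 3 ≤ n) (x : Atilde n) : tauDown hn (tauUp hn x) = x := by
  have : (tauDown hn).comp (tauUp hn) = MonoidHom.id (Atilde n) := by
    apply PresentedGroup.ext
    intro k
    show tauDown hn (tauUp hn (.of k)) = .of k
    rw [tauUp, PresentedGroup.toGroup.of, tauDown, PresentedGroup.toGroup.of]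
    congr 1
    ext
    show (((k : ℕ) + 1) % n + (n - 1)) % n = (k : ℕ)
    rw [Nat.mod_add_mod, show (k:ℕ) + 1 + (n-1) = (k:ℕ) + n by omega,
      Nat.add_mod_right, Nat.mod_eq_of_lt k.isLt]
  exact DFunLike.congr_fun this x

lemma tauUp_tauDown (hn : 3 ≤ n) (x : Atilde n) : tauUp hn (tauDown hn x) = x := by
  have : (tauUp hn).comp (tauDown hn) = MonoidHom.id (Atilde n) := by
    apply PresentedGroup.ext
    intro k
    show tauUp hn (tauDown hn (.of k)) = .of k
    rw [tauDown, PresentedGroup.toGroup.of, tauUp, PresentedGroup.toGroup.of]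
    congr 1
    ext
    show (((k : ℕ) + (n-1)) % n + 1) % n = (k : ℕ)
    rw [Nat.mod_add_mod, show (k:ℕ) + (n-1) + 1 = (k:ℕ) + n by omega,
      Nat.add_mod_right, Nat.mod_eq_of_lt k.isLt]
  exact DFunLike.congr_fun this x

noncomputable def sigmaA (hn : 3 ≤ n) : MulAut (Atilde n) :=
  MonoidHom.toMulEquiv (tauUp hn) (tauDown hn)
    (by ext x; exact tauDown_tauUp hn (.of x))
    (by ext x; exact tauUp_tauDown hn (.of x))

lemma sigmaA_apply (hn : 3 ≤ n) (x : Atilde n) : sigmaA hn x = tauUp hn x := rfl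

lemma tauUp_a (hn : 3 ≤ n) (i : ℕ) (h1 : 1 ≤ i) : tauUp hn (a n i) = a n (i % n + 1) := by
  rw [a_eq hn i, a_eq hn (i % n + 1), tauUp, PresentedGroup.toGroup.of]
  congr 1
  ext
  show ((i - 1) % n + 1) % n = (i % n + 1 - 1) % n
  rw [Nat.mod_add_mod, show i - 1 + 1 = i by omega, show i % n + 1 - 1 = i % n by omega,
    Nat.mod_mod_of_dvd i (dvd_refl n)]

lemma tauDown_a (hn : 3 ≤ n) (i : ℕ) (h1 : 2 ≤ i) (h2 : i ≤ n) :
    tauDown hn (a n i) = a n (i-1) := by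
  rw [a_eq hn i, a_eq hn (i-1), tauDown, PresentedGroup.toGroup.of]
  congr 1
  ext
  show ((i - 1) % n + (n - 1)) % n = (i - 1 - 1) % n
  rw [Nat.mod_add_mod, show i - 1 + (n - 1) = (i - 1 - 1) + n by omega, Nat.add_mod_right]

lemma tauDown_a1 (hn : 3 ≤ n) : tauDown hn (a n 1) = a n n := by
  rw [a_eq hn 1, a_eq hn n, tauDown, PresentedGroup.toGroup.of]
  congr 1
  ext
  show ((1 - 1) % n + (n - 1)) % n = (n - 1) % n
  norm_num

end ASide

section Semidirect

variable {n : ℕ}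

noncomputable def phiZ (hn : 3 ≤ n) : Multiplicative ℤ →* MulAut (Atilde n) :=
  zpowersHom (MulAut (Atilde n)) (sigmaA hn)

def zz : Multiplicative ℤ := Multiplicative.ofAdd 1

lemma phiZ_z (hn : 3 ≤ n) (x : Atilde n) : phiZ hn zz x = tauUp hn x := by
  rw [phiZ, zpowersHom_apply]
  simp only [zz, toAdd_ofAdd, zpow_one]
  rfl

/-- The group `A(Ã_{n-1}) ⋊ ℤ`. -/
abbrev Gsd (hn : 3 ≤ n) : Type := SemidirectProduct (Atilde n) (Multiplicative ℤ) (phiZ hn)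

open SemidirectProduct in
lemma swap_inl_inr (hn : 3 ≤ n) (x : Atilde n) :
    (inl x : Gsd hn) * inr zz = inr zz * inl (tauDown hn x) := by
  have h := SemidirectProduct.inl_aut (φ := phiZ hn) zz (tauDown hn x)
  rw [phiZ_z hn (tauDown hn x), tauUp_tauDown hn x, map_inv] at h
  rw [h]; group

open SemidirectProduct in
lemma conj_inr (hn : 3 ≤ n) (x : Atilde n) :
    (inr zz : Gsd hn) * inl x * (inr zz)⁻¹ = inl (tauUp hn x) := by
  have h := SemidirectProduct.inl_aut (φ := phiZ hn) zz x
  rw [phiZ_z hn x, map_inv] at h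
  rw [h]

/-- `c = a_1 ⋯ a_{n-1}` in `A(Ã_{n-1})`. -/
noncomputable def cAt (n : ℕ) : Atilde n := P (a n) 1 (n-1)

lemma tauDown_P (hn : 3 ≤ n) (k s : ℕ) (h1 : 1 ≤ s) (h2 : s + k ≤ n) :
    tauDown hn (P (a n) (s+1) k) = P (a n) s k := by
  induction k with
  | zero => simp [P]
  | succ k ih =>
    rw [P_concat, P_concat, map_mul, ih (by omega)]
    congr 1
    rw [tauDown_a hn (s+1+k) (by omega) (by omega), show s+1+k-1 = s+k by omega]

lemma tauDown_cAt (hn : 3 ≤ n) : tauDown hn (cAt n) = a n n * P (a n) 1 (n-2) := by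
  rw [cAt, show n - 1 = (n-2) + 1 by omega, P_cons, map_mul, tauDown_a1 hn]
  congr 1
  exact tauDown_P hn (n-2) 1 (by omega) (by omega)

open SemidirectProduct in
noncomputable def fB (hn : 3 ≤ n) : Fin n → Gsd hn :=
  fun k => if (k : ℕ) = 0 then inr zz * (inl (cAt n))⁻¹ else inl (a n k)

open SemidirectProduct in
lemma fB_at (hn : 3 ≤ n) (i : ℕ) (h : i < n) (h1 : i ≠ 0) :
    fB hn ⟨i, h⟩ = inl (a n i) := by simp [fB, h1]

open SemidirectProduct in
lemma fB_at0 (hn : 3 ≤ n) (h : 0 < n) : fB hn ⟨0, h⟩ = inr zz * (inl (cAt n))⁻¹ := by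
  simp [fB]

open SemidirectProduct in
lemma sq_form (hn : 3 ≤ n) (w : Atilde n) :
    (inr zz * inl w : Gsd hn) * (inr zz * inl w)
      = inr zz * inr zz * inl (tauDown hn w * w) := by
  calc (inr zz * inl w : Gsd hn) * (inr zz * inl w)
      = inr zz * (inl w * inr zz) * inl w := by group
    _ = inr zz * (inr zz * inl (tauDown hn w)) * inl w := by rw [swap_inl_inr hn]
    _ = inr zz * inr zz * (inl (tauDown hn w) * inl w) := by group
    _ = inr zz * inr zz * inl (tauDown hn w * w) := by
        rw [← map_mul (inl : Atilde n →* Gsd hn) (tauDown hn w) w]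

open SemidirectProduct in
lemma fB_rels (hn : 3 ≤ n) : ∀ r ∈ BnRels n, FreeGroup.lift (fB hn) r = 1 := by
  rintro r ⟨i, j, (⟨hi0, hj1, rfl⟩ | ⟨hi1, hji, rfl⟩ | ⟨hi0, hj2, rfl⟩ | ⟨hi1, hij, rfl⟩)⟩
  · -- w4 relation  t s₁ t s₁ = s₁ t s₁ t
    simp only [w4Rel, map_mul, map_inv, FreeGroup.lift_apply_of, mul_inv_eq_one]
    have e0 : fB hn i = inr zz * (inl (cAt n))⁻¹ := by
      have : i = ⟨0, by omega⟩ := Fin.ext hi0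
      rw [this, fB_at0 hn (by omega)]
    have e1 : fB hn j = inl (a n 1) := by
      have : j = ⟨1, by omega⟩ := Fin.ext hj1
      rw [this, fB_at hn 1 (by omega) (by omega)]
    rw [e0, e1]
    set c := cAt n with hc
    set a1 := a n 1 with ha1
    set An := a n n with hAn
    set An1 := a n (n - 1) with hAn1
    set Pe := P (a n) 1 (n-2) with hPe
    set Qe := P (a n) 2 (n-2) with hQe
    have k1 : Pe * An1 = c := by
      rw [hPe, hAn1, hc, cAt, show n - 1 = (n-2) + 1 by omega, P_concat]
      congr 1
      exact congrArg (a n) (by omega)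
    have k2 : c * Pe = Qe * c := by
      rw [hPe, hQe, hc, cAt]
      exact lemC (n-1) (a n) (Habr hn) (Hacm hn) (n-2) (by omega)
    have k3 : a1 * Qe = c := by
      rw [ha1, hQe, hc, cAt, show n - 1 = (n-2) + 1 by omega, P_cons]
    have td1 : tauDown hn (c⁻¹ * a1) = Pe⁻¹ := by
      rw [map_mul, map_inv, tauDown_cAt hn, ha1, tauDown_a1 hn, ← hAn, ← hPe]
      group
    have hXA : (inr zz * (inl c)⁻¹ : Gsd hn) * inl a1 = inr zz * inl (c⁻¹ * a1) := by
      rw [mul_assoc, ← map_inv (inl : Atilde n →* Gsd hn) c,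
        ← map_mul (inl : Atilde n →* Gsd hn) c⁻¹ a1]
    have hAX : (inl a1 : Gsd hn) * (inr zz * (inl c)⁻¹)
        = inr zz * inl (tauDown hn a1 * c⁻¹) := by
      rw [← mul_assoc, swap_inl_inr hn, mul_assoc, ← map_inv (inl : Atilde n →* Gsd hn) c,
        ← map_mul (inl : Atilde n →* Gsd hn) (tauDown hn a1) c⁻¹]
    have hu : tauDown hn (c⁻¹ * a1) * (c⁻¹ * a1) = Pe⁻¹ * (c⁻¹ * a1) := by rw [td1]
    have hv : tauDown hn (tauDown hn a1 * c⁻¹) * (tauDown hn a1 * c⁻¹)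
        = An1 * Pe⁻¹ * c⁻¹ := by
      rw [map_mul, map_inv, ha1, tauDown_a1 hn, ← hAn, tauDown_a hn n (by omega) (le_refl n),
        show n - 1 = n - 1 from rfl, ← hAn1, tauDown_cAt hn, ← hAn, ← hPe]
      group
    have hT : Pe⁻¹ * (c⁻¹ * a1) = An1 * Pe⁻¹ * c⁻¹ := by
      have h1 : c * Pe * An1 = a1 * (c * Pe) := by
        rw [mul_assoc, k1, k2, ← mul_assoc, k3]
      calc Pe⁻¹ * (c⁻¹ * a1)
          = Pe⁻¹ * c⁻¹ * (a1 * (c * Pe)) * (c * Pe)⁻¹ := by group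
        _ = Pe⁻¹ * c⁻¹ * (c * Pe * An1) * (c * Pe)⁻¹ := by rw [← h1]
        _ = An1 * Pe⁻¹ * c⁻¹ := by group
    calc inr zz * (inl c)⁻¹ * inl a1 * (inr zz * (inl c)⁻¹) * inl a1
        = ((inr zz * (inl c)⁻¹) * inl a1) * ((inr zz * (inl c)⁻¹) * inl a1) := by group
      _ = (inr zz * inl (c⁻¹ * a1)) * (inr zz * inl (c⁻¹ * a1)) := by rw [hXA]
      _ = inr zz * inr zz * inl (tauDown hn (c⁻¹ * a1) * (c⁻¹ * a1)) := sq_form hn _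
      _ = inr zz * inr zz * inl (tauDown hn (tauDown hn a1 * c⁻¹) * (tauDown hn a1 * c⁻¹)) := by
          rw [hu, hv, hT]
      _ = (inr zz * inl (tauDown hn a1 * c⁻¹)) * (inr zz * inl (tauDown hn a1 * c⁻¹)) :=
          (sq_form hn _).symm
      _ = (inl a1 * (inr zz * (inl c)⁻¹)) * (inl a1 * (inr zz * (inl c)⁻¹)) := by rw [hAX]
      _ = inl a1 * (inr zz * (inl c)⁻¹) * inl a1 * (inr zz * (inl c)⁻¹) := by group
  · -- braid relation among s's
    simp only [braidRel, map_mul, map_inv, FreeGroup.lift_apply_of, mul_inv_eq_one]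
    have ei : fB hn i = inl (a n i) := by
      have : i = ⟨(i : ℕ), i.isLt⟩ := Fin.ext rfl
      rw [this, fB_at hn i i.isLt (by omega)]
    have ej : fB hn j = inl (a n ((i:ℕ)+1)) := by
      have : j = ⟨(i : ℕ)+1, by omega⟩ := Fin.ext hji
      rw [this, fB_at hn ((i:ℕ)+1) (by omega) (by omega)]
    rw [ei, ej, ← map_mul, ← map_mul, ← map_mul, ← map_mul]
    exact congrArg _ (Habr hn i hi1 (by omega))
  · -- commutation of t with s_j, j ≥ 2
    simp only [commRel, map_mul, map_inv, FreeGroup.lift_apply_of, mul_inv_eq_one]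
    have e0 : fB hn i = inr zz * (inl (cAt n))⁻¹ := by
      have : i = ⟨0, by omega⟩ := Fin.ext hi0
      rw [this, fB_at0 hn (by omega)]
    have ej : fB hn j = inl (a n j) := by
      have : j = ⟨(j : ℕ), j.isLt⟩ := Fin.ext rfl
      rw [this, fB_at hn j j.isLt (by omega)]
    rw [e0, ej]
    set c := cAt n with hc
    have hB : c * a n ((j:ℕ)-1) = a n j * c := by
      have := lemB (n-1) (a n) (Habr hn) (Hacm hn) ((j:ℕ)-1) (by omega) (by omega)
      rwa [show (j:ℕ) - 1 + 1 = j by omega] at this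
    have key : c⁻¹ * a n j = tauDown hn (a n j) * c⁻¹ := by
      rw [tauDown_a hn j (by omega) (by omega)]
      calc c⁻¹ * a n j = c⁻¹ * (a n j * c) * c⁻¹ := by group
        _ = c⁻¹ * (c * a n ((j:ℕ)-1)) * c⁻¹ := by rw [← hB]
        _ = a n ((j:ℕ)-1) * c⁻¹ := by group
    calc inr zz * (inl c)⁻¹ * inl (a n j)
        = inr zz * inl (c⁻¹ * a n j) := by
          rw [mul_assoc, ← map_inv (inl : Atilde n →* Gsd hn) c,
            ← map_mul (inl : Atilde n →* Gsd hn) c⁻¹ (a n j)]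
      _ = inr zz * inl (tauDown hn (a n j) * c⁻¹) := by rw [key]
      _ = inr zz * (inl (tauDown hn (a n j)) * inl c⁻¹) := by
          rw [← map_mul (inl : Atilde n →* Gsd hn) (tauDown hn (a n j)) c⁻¹]
      _ = (inl (a n j) * inr zz) * inl c⁻¹ := by rw [swap_inl_inr hn]; group
      _ = inl (a n j) * (inr zz * (inl c)⁻¹) := by
          rw [← map_inv (inl : Atilde n →* Gsd hn) c]; group
  · -- commutation among s's
    simp only [commRel, map_mul, map_inv, FreeGroup.lift_apply_of, mul_inv_eq_one]
    have ei : fB hn i = inl (a n i) := by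
      have : i = ⟨(i : ℕ), i.isLt⟩ := Fin.ext rfl
      rw [this, fB_at hn i i.isLt (by omega)]
    have ej : fB hn j = inl (a n j) := by
      have : j = ⟨(j : ℕ), j.isLt⟩ := Fin.ext rfl
      rw [this, fB_at hn j j.isLt (by omega)]
    rw [ei, ej, ← map_mul, ← map_mul]
    exact congrArg _ (Hacm hn i j hi1 hij (by omega)).eq

noncomputable def Phi (hn : 3 ≤ n) : ArtinB n →* Gsd hn :=
  PresentedGroup.toGroup (fB_rels hn)

open SemidirectProduct in
lemma Phi_bgen (hn : 3 ≤ n) (i : ℕ) (h1 : 1 ≤ i) (h2 : i ≤ n - 1) :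
    Phi hn (bgen n i) = inl (a n i) := by
  rw [bgen_eq i (by omega), Phi, PresentedGroup.toGroup.of, fB_at hn i (by omega) (by omega)]

open SemidirectProduct in
lemma Phi_P (hn : 3 ≤ n) (k s : ℕ) (h1 : 1 ≤ s) (h2 : s + k ≤ n) :
    Phi hn (P (bgen n) s k) = inl (P (a n) s k) := by
  induction k with
  | zero => simp [P]
  | succ k ih =>
    rw [P_concat, P_concat, map_mul, map_mul, ih (by omega),
      Phi_bgen hn (s+k) (by omega) (by omega)]

open SemidirectProduct in
lemma Phi_delta (hn : 3 ≤ n) : Phi hn (delta n) = inr zz := by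
  rw [delta_eq hn, map_mul, Phi_P hn (n-1) 1 (by omega) (by omega)]
  have e0 : Phi hn (bgen n 0) = inr zz * (inl (cAt n))⁻¹ := by
    rw [bgen_eq 0 (by omega), Phi, PresentedGroup.toGroup.of, fB_at0 hn (by omega)]
  rw [e0, cAt]
  group

open SemidirectProduct in
lemma Phi_sgen (hn : 3 ≤ n) (i : ℕ) (h1 : 1 ≤ i) (h2 : i ≤ n) :
    Phi hn (sgen n i) = inl (a n i) := by
  rcases Nat.lt_or_ge i n with hlt | hge
  · rw [sgen_eq_bgen (by omega), Phi_bgen hn i h1 (by omega)]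
  · have hi : i = n := by omega
    rw [hi, sgen_top, map_mul, map_mul, map_inv, Phi_delta hn,
      Phi_bgen hn (n-1) (by omega) (by omega), conj_inr hn]
    congr 1
    rw [tauUp_a hn (n-1) (by omega), Nat.mod_eq_of_lt (by omega), show n - 1 + 1 = n by omega]

end Semidirect

section PsiSec

variable {n : ℕ}

lemma braidS (hn : 3 ≤ n) (i : ℕ) (h1 : 1 ≤ i) (h2 : i ≤ n) :
    sgen n i * sgen n (i % n + 1) * sgen n i
      = sgen n (i % n + 1) * sgen n i * sgen n (i % n + 1) := by
  rcases Nat.lt_or_ge i (n-1) with hlt | hge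
  · rw [Nat.mod_eq_of_lt (by omega)]
    exact braidS_le hn i h1 (by omega)
  · rcases Nat.lt_or_ge i n with hlt2 | hge2
    · have hi : i = n - 1 := by omega
      rw [hi, Nat.mod_eq_of_lt (by omega), show n - 1 + 1 = n by omega]
      exact braidS_n1 hn
    · have hi : i = n := by omega
      rw [hi, Nat.mod_self]
      exact braidS_n hn

noncomputable def fA (n : ℕ) : Fin n → ArtinB n := fun k => sgen n ((k : ℕ) + 1)

lemma fA_rels (hn : 3 ≤ n) : ∀ r ∈ AtildeRels n, FreeGroup.lift (fA n) r = 1 := by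
  rintro r ⟨i, j, (⟨hj, rfl⟩ | ⟨hne, hji, hij, rfl⟩)⟩
  · simp only [braidRel, map_mul, map_inv, FreeGroup.lift_apply_of, mul_inv_eq_one, fA]
    rw [hj]
    exact braidS hn ((i:ℕ)+1) (by omega) (by omega)
  · simp only [commRel, map_mul, map_inv, FreeGroup.lift_apply_of, mul_inv_eq_one, fA]
    rcases Nat.lt_trichotomy (i : ℕ) (j : ℕ) with hlt | heq | hgt
    · have hne2 : (j : ℕ) ≠ (i : ℕ) + 1 := by
        intro h
        exact hji (by rw [h, Nat.mod_eq_of_lt (by omega : (i:ℕ)+1 < n)])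
      have hne3 : ¬((i:ℕ) + 1 = 1 ∧ (j:ℕ) + 1 = n) := by
        rintro ⟨ha, hb⟩
        apply hij
        have : (j:ℕ) = n - 1 := by omega
        rw [this, show n - 1 + 1 = n by omega, Nat.mod_self]
        omega
      exact (commS hn ((i:ℕ)+1) ((j:ℕ)+1) (by omega) (by omega) (by omega) hne3).eq
    · exact absurd (Fin.ext heq) hne
    · have hne2 : (i : ℕ) ≠ (j : ℕ) + 1 := by
        intro h
        exact hij (by rw [h, Nat.mod_eq_of_lt (by omega : (j:ℕ)+1 < n)])
      have hne3 : ¬((j:ℕ) + 1 = 1 ∧ (i:ℕ) + 1 = n) := by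
        rintro ⟨ha, hb⟩
        apply hji
        have : (i:ℕ) = n - 1 := by omega
        rw [this, show n - 1 + 1 = n by omega, Nat.mod_self]
        omega
      exact (commS hn ((j:ℕ)+1) ((i:ℕ)+1) (by omega) (by omega) (by omega) hne3).symm.eq

noncomputable def Psi (hn : 3 ≤ n) : Atilde n →* ArtinB n := PresentedGroup.toGroup (fA_rels hn)

lemma Psi_of (hn : 3 ≤ n) (k : Fin n) : Psi hn (.of k) = sgen n ((k : ℕ) + 1) :=
  PresentedGroup.toGroup.of (fA_rels hn)

lemma Phi_Psi (hn : 3 ≤ n) (x : Atilde n) :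
    Phi hn (Psi hn x) = SemidirectProduct.inl x := by
  have hcomp : (Phi hn).comp (Psi hn) = SemidirectProduct.inl := by
    apply PresentedGroup.ext
    intro k
    show Phi hn (Psi hn (.of k)) = SemidirectProduct.inl (.of k)
    rw [Psi_of hn k, Phi_sgen hn ((k:ℕ)+1) (by omega) (by omega)]
    congr 1
    rw [a_eq hn ((k:ℕ)+1)]
    congr 1
    exact Fin.ext (by simp [Nat.mod_eq_of_lt k.isLt])
  exact DFunLike.congr_fun hcomp x

lemma Psi_inj (hn : 3 ≤ n) : Function.Injective (Psi hn) := by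
  intro x y h
  have h2 := congrArg (Phi hn) h
  rw [Phi_Psi hn x, Phi_Psi hn y] at h2
  exact SemidirectProduct.inl_injective h2

lemma Psi_range (hn : 3 ≤ n) :
    (Psi hn).range = Subgroup.closure (sgen n '' Set.Icc 1 n) := by
  rw [MonoidHom.range_eq_map, ← PresentedGroup.closure_range_of (AtildeRels n),
    MonoidHom.map_closure]
  congr 1
  ext x
  constructor
  · rintro ⟨_, ⟨k, rfl⟩, rfl⟩
    exact ⟨(k:ℕ)+1, ⟨by omega, by omega⟩, (Psi_of hn k).symm⟩
  · rintro ⟨i, ⟨hi1, hi2⟩, rfl⟩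
    refine ⟨PresentedGroup.of ⟨i-1, by omega⟩, ⟨⟨i-1, by omega⟩, rfl⟩, ?_⟩
    rw [Psi_of hn]
    congr 1
    show (i-1) + 1 = i
    omega

end PsiSec


/-- For `n ≥ 3`, the subgroup of `A(B_n)` generated by
`s_1, …, s_n` is isomorphic to `A(Ã_{n-1})` via an isomorphism sending the
standard generator `a_i` to `s_i` for every `i ∈ {1, …, n}`. -/
theorem subgroup_generated_by_s_iso_Atilde (n : ℕ) (hn : 3 ≤ n) :
    ∃ φ : Atilde n ≃* (Subgroup.closure (sgen n '' Set.Icc 1 n) : Subgroup (ArtinB n)),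
      ∀ i : ℕ, 1 ≤ i → i ≤ n → ((φ (a n i) : ArtinB n) = sgen n i) := by
  refine ⟨(MonoidHom.ofInjective (Psi_inj hn)).trans (MulEquiv.subgroupCongr (Psi_range hn)), ?_⟩
  intro i h1 h2
  rw [MulEquiv.trans_apply, MulEquiv.subgroupCongr_apply, MonoidHom.ofInjective_apply]
  rw [a_eq hn i, Psi_of hn]
  congr 1
  show (i-1) % n + 1 = i
  rw [Nat.mod_eq_of_lt (by omega)]
  omega


end Stmt0
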